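/- Let G be a transitively closed DAG on n jobs with no isolated vertices, m ≥ 1, and suppose G has at most m sources. Then G admits a feasible m-machine schedule of makespan T if and only if the graph obtained by deleting all sources admits a feasible m-machine schedule of makespan T − 1 (for T ≥ 1). -/

import Mathlib

/-- A feasible schedule for a precedence relation `r` on job set `X` with `m`
machines and makespan `T`. -/
def IsSchedule {V : Type*} [DecidableEq V] (r : V → V → Prop)
    (X : Finset V) (m T : ℕ) (S : Fin T → Finset V) : Prop :=
  (∀ t, S t ⊆ X) ∧ (∀ v ∈ X, ∃! t, v ∈ S t) ∧ (∀ t, (S t).card ≤ m) ∧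
  ∀ u v, r u v → ∀ t t', u ∈ S t → v ∈ S t' → t < t'

/-- Reduction rule: if a transitively closed DAG without isolated vertices has
at most `m` sources, then it is schedulable with makespan `T` iff deleting all
sources leaves a set schedulable with makespan `T - 1`. -/
theorem delete_sources_schedule_iff
    {V : Type*} [DecidableEq V] (r : V → V → Prop)
    (htrans : Transitive r) (hirr : Irreflexive r)
    (X : Finset V) (hniso : ∀ v ∈ X, ∃ u ∈ X, r u v ∨ r v u)
    (m T : ℕ) (hm : 1 ≤ m) (hT : 1 ≤ T)
    (Src : Finset V) (hSrc : ∀ v, v ∈ Src ↔ v ∈ X ∧ ∀ u ∈ X, ¬ r u v)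
    (hcard : Src.card ≤ m) :
    (∃ S : Fin T → Finset V, IsSchedule r X m T S) ↔
      ∃ S' : Fin (T - 1) → Finset V, IsSchedule r (X \ Src) m (T - 1) S' := by
  constructor
  · rintro ⟨S, hsub, huniq, hc, hprec⟩
    refine ⟨fun t => S ⟨t.1 + 1, by omega⟩ \ Src, ?_, ?_, ?_, ?_⟩
    · intro t v hv
      rw [Finset.mem_sdiff] at hv ⊢
      exact ⟨hsub _ hv.1, hv.2⟩
    · intro v hv
      rw [Finset.mem_sdiff] at hv
      have hpred : ∃ u ∈ X, r u v := by
        by_contra h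
        push_neg at h
        exact hv.2 ((hSrc v).mpr ⟨hv.1, h⟩)
      obtain ⟨u, hu, hru⟩ := hpred
      obtain ⟨t, ht, htuniq⟩ := huniq v hv.1
      obtain ⟨s, hs, _⟩ := huniq u hu
      have hlt : s < t := hprec u v hru s t hs ht
      have ht1 : 1 ≤ t.1 := by
        have := hlt
        rw [Fin.lt_def] at this
        omega
      refine ⟨⟨t.1 - 1, by omega⟩, ?_, ?_⟩
      · show v ∈ S ⟨t.1 - 1 + 1, by omega⟩ \ Src
        rw [Finset.mem_sdiff]
        refine ⟨?_, hv.2⟩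
        convert ht using 2
        apply Fin.ext; simp; omega
      · intro t' ht'
        rw [Finset.mem_sdiff] at ht'
        have h2 := htuniq _ ht'.1
        apply Fin.ext
        have h3 : t'.1 + 1 = t.1 := congrArg Fin.val h2
        simp only
        omega
    · intro t
      exact le_trans (Finset.card_le_card (Finset.sdiff_subset)) (hc _)
    · intro u v hr t t' hu hv
      rw [Finset.mem_sdiff] at hu hv
      have := hprec u v hr _ _ hu.1 hv.1
      rw [Fin.lt_def] at this ⊢
      simpa using this
  · rintro ⟨S', hsub, huniq, hc, hprec⟩
    refine ⟨fun t => if h : t.1 = 0 then Src else S' ⟨t.1 - 1, by omega⟩, ?_, ?_, ?_, ?_⟩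
    · intro t v hv
      by_cases h : t.1 = 0
      · simp only [h, dif_pos] at hv
        exact ((hSrc v).mp hv).1
      · simp only [h, dif_neg] at hv
        exact (Finset.mem_sdiff.mp (hsub _ hv)).1
    · intro v hv
      by_cases hvS : v ∈ Src
      · refine ⟨⟨0, by omega⟩, by simp [hvS], ?_⟩
        intro t ht
        by_cases h : t.1 = 0
        · apply Fin.ext; simpa using h
        · simp only [h, dif_neg] at ht
          exact absurd hvS (Finset.mem_sdiff.mp (hsub _ ht)).2
      · obtain ⟨t, ht, htuniq⟩ := huniq v (Finset.mem_sdiff.mpr ⟨hv, hvS⟩)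
        refine ⟨⟨t.1 + 1, by omega⟩, ?_, ?_⟩
        · simp only [Nat.add_one_ne_zero, dif_neg, dite_false, Nat.add_sub_cancel]
          convert ht using 2
        · intro t' ht'
          by_cases h : t'.1 = 0
          · simp only [h, dif_pos] at ht'
            exact absurd ht' hvS
          · simp only [h, dif_neg] at ht'
            have := htuniq _ ht'
            apply Fin.ext
            have h3 := congrArg Fin.val this
            simp only at h3 ⊢
            omega
    · intro t
      by_cases h : t.1 = 0
      · simpa [h] using hcard
      · simpa [h] using hc _
    · intro u v hr t t' hu hv
      have ht'pos : t'.1 ≠ 0 := by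
        intro h0
        simp only [h0, dif_pos] at hv
        have hu' : u ∈ X := by
          by_cases h : t.1 = 0
          · simp only [h, dif_pos] at hu
            exact ((hSrc u).mp hu).1
          · simp only [h, dif_neg] at hu
            exact (Finset.mem_sdiff.mp (hsub _ hu)).1
        exact ((hSrc v).mp hv).2 u hu' hr
      by_cases h : t.1 = 0
      · rw [Fin.lt_def]; omega
      · simp only [h, dif_neg] at hu
        simp only [ht'pos, dif_neg] at hv
        have := hprec u v hr _ _ hu hv
        rw [Fin.lt_def] at this ⊢
        simp only at this
        omega
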